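/- For Φ ∈ C²(Ω̄_II) with Ω_II = (−δ,δ)×(0,d), writing Φ₋(y) = Φ(−δ,y), Φ₊(y) = Φ(δ,y), one has ‖Φ‖²_{L²(Ω_II)} ≤ 2δ ( ‖Φ₋‖_{L²(0,d)} ‖Φ₊‖_{L²(0,d)} + √(2δ) ‖|Φ₋|+|Φ₊|‖_{L²(0,d)} ‖∂Φ/∂x‖_{L²(Ω_II)} + 2δ ‖∂Φ/∂x‖²_{L²(Ω_II)} ). -/

import Mathlib

open MeasureTheory Set Real

/-- For `Φ ∈ C²` on the closed rectangle `Ω̄_II = [−δ,δ]×[0,d]`, with boundary traces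
`Φ∓(y) = Φ(∓δ,y)`, one has
`‖Φ‖²_{L²(Ω_II)} ≤ 2δ(‖Φ₋‖‖Φ₊‖ + √(2δ)‖|Φ₋|+|Φ₊|‖ ‖∂ₓΦ‖ + 2δ‖∂ₓΦ‖²)`. -/
lemma cs_helper {μ : Measure ℝ} {f g : ℝ → ℝ} (hf0 : ∀ x, 0 ≤ f x) (hg0 : ∀ x, 0 ≤ g x)
    (hf : MemLp f 2 μ) (hg : MemLp g 2 μ) :
    ∫ x, f x * g x ∂μ ≤ Real.sqrt (∫ x, f x ^ 2 ∂μ) * Real.sqrt (∫ x, g x ^ 2 ∂μ) := by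
  have h2 : (ENNReal.ofReal (2:ℝ)) = 2 := by norm_num
  have := MeasureTheory.integral_mul_le_Lp_mul_Lq_of_nonneg
    (μ := μ) (p := 2) (q := 2) Real.HolderConjugate.two_two
    (Filter.Eventually.of_forall hf0) (Filter.Eventually.of_forall hg0)
    (h2 ▸ hf) (h2 ▸ hg)
  have e1 : ∀ x, f x ^ (2:ℝ) = f x ^ (2:ℕ) := fun x => by
    rw [← Real.rpow_natCast (f x) 2]; norm_num
  have e2 : ∀ x, g x ^ (2:ℝ) = g x ^ (2:ℕ) := fun x => by
    rw [← Real.rpow_natCast (g x) 2]; norm_num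
  simp only [e1, e2] at this
  calc ∫ x, f x * g x ∂μ
      ≤ (∫ x, f x ^ (2:ℕ) ∂μ) ^ (1/2:ℝ) * (∫ x, g x ^ (2:ℕ) ∂μ) ^ (1/2:ℝ) := this
    _ = Real.sqrt (∫ x, f x ^ 2 ∂μ) * Real.sqrt (∫ x, g x ^ 2 ∂μ) := by
        rw [Real.sqrt_eq_rpow, Real.sqrt_eq_rpow]

lemma mul_int_helper {μ : Measure ℝ} {f g : ℝ → ℝ} (hf : MemLp f 2 μ) (hg : MemLp g 2 μ) :
    Integrable (fun x => f x * g x) μ := by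
  refine Integrable.mono' (((hf.integrable_sq.add hg.integrable_sq)).const_mul (1/2))
    (hf.1.mul hg.1) (Filter.Eventually.of_forall fun x => ?_)
  have := abs_mul (f x) (g x)
  rw [Real.norm_eq_abs]; simp only [Pi.add_apply]
  nlinarith [sq_nonneg (|f x| - |g x|), sq_abs (f x), sq_abs (g x), abs_mul (f x) (g x), abs_nonneg (f x * g x)]

theorem stmt12 (d δ : ℝ) (hd : 0 < d) (hδ : 0 < δ) (Φ : ℝ × ℝ → ℂ)
    (hΦ : ContDiffOn ℝ 2 Φ (Set.Icc (-δ) δ ×ˢ Set.Icc 0 d)) :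
    (∫ p in Set.Ioo (-δ) δ ×ˢ Set.Ioo (0 : ℝ) d, ‖Φ p‖ ^ 2)
      ≤ 2 * δ *
        (Real.sqrt (∫ y in Set.Ioo (0 : ℝ) d, ‖Φ (-δ, y)‖ ^ 2) *
            Real.sqrt (∫ y in Set.Ioo (0 : ℝ) d, ‖Φ (δ, y)‖ ^ 2)
          + Real.sqrt (2 * δ) *
            Real.sqrt (∫ y in Set.Ioo (0 : ℝ) d, (‖Φ (-δ, y)‖ + ‖Φ (δ, y)‖) ^ 2) *
            Real.sqrt (∫ p in Set.Ioo (-δ) δ ×ˢ Set.Ioo (0 : ℝ) d,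
              ‖deriv (fun x => Φ (x, p.2)) p.1‖ ^ 2)
          + 2 * δ * ∫ p in Set.Ioo (-δ) δ ×ˢ Set.Ioo (0 : ℝ) d,
              ‖deriv (fun x => Φ (x, p.2)) p.1‖ ^ 2) := by
  have hδδ : -δ < δ := by linarith
  set R : Set (ℝ×ℝ) := Icc (-δ) δ ×ˢ Icc 0 d with hRdef
  set S : Set (ℝ×ℝ) := Ioo (-δ) δ ×ˢ Ioo 0 d with hSdef
  have hSR : S ⊆ R := prod_mono Ioo_subset_Icc_self Ioo_subset_Icc_self
  have hSopen : IsOpen S := isOpen_Ioo.prod isOpen_Ioo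
  have hSmeas : MeasurableSet S := hSopen.measurableSet
  have hRcomp : IsCompact R := isCompact_Icc.prod isCompact_Icc
  have hUD : UniqueDiffOn ℝ R := (uniqueDiffOn_Icc hδδ).prod (uniqueDiffOn_Icc hd)
  -- retraction onto R
  set c : ℝ×ℝ → ℝ×ℝ := fun p => (min δ (max (-δ) p.1), min d (max 0 p.2)) with hcdef
  have hccont : Continuous c := by
    apply Continuous.prodMk
    · exact continuous_const.min (continuous_const.max continuous_fst)
    · exact continuous_const.min (continuous_const.max continuous_snd)
  have hcmem : ∀ p, c p ∈ R := fun p =>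
    ⟨⟨le_min hδδ.le (le_max_left _ _), min_le_left _ _⟩,
     ⟨le_min hd.le (le_max_left _ _), min_le_left _ _⟩⟩
  have hcid : ∀ p ∈ R, c p = p := by
    rintro ⟨x, y⟩ ⟨⟨h1, h2⟩, h3, h4⟩
    simp only [hcdef, Prod.mk.injEq]
    constructor
    · rw [max_eq_right h1, min_eq_right h2]
    · rw [max_eq_right h3, min_eq_right h4]
  -- derivative
  set Φ' : ℝ×ℝ → ℂ := fun p => fderivWithin ℝ Φ R p (1, 0) with hΦ'def
  have hΦ'c : ContinuousOn Φ' R :=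
    ((hΦ.fderivWithin (m := 1) hUD (by norm_num)).continuousOn).clm_apply continuousOn_const
  set Ψ : ℝ×ℝ → ℂ := fun p => Φ' (c p) with hΨdef
  have hΨcont : Continuous Ψ := hΦ'c.comp_continuous hccont hcmem
  have hΨeq : ∀ p ∈ R, Ψ p = Φ' p := fun p hp => by rw [hΨdef]; simp only [hcid p hp]
  have hderiv : ∀ p ∈ S, HasDerivAt (fun x => Φ (x, p.2)) (Ψ p) p.1 := by
    intro p hp
    have hnhds : R ∈ nhds p := Filter.mem_of_superset (hSopen.mem_nhds hp) hSR
    have hdiff : DifferentiableAt ℝ Φ p :=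
      (hΦ.differentiableOn (by norm_num)).differentiableAt hnhds
    have h1 : HasDerivAt (fun x : ℝ => (x, p.2)) ((1:ℝ), (0:ℝ)) p.1 :=
      (hasDerivAt_id p.1).prodMk (hasDerivAt_const p.1 p.2)
    have h2 := hdiff.hasFDerivAt.comp_hasDerivAt p.1 h1
    have h3 : Ψ p = fderiv ℝ Φ p (1, 0) := by
      rw [hΨeq p (hSR hp)]
      show fderivWithin ℝ Φ R p (1, 0) = fderiv ℝ Φ p (1, 0)
      rw [fderivWithin_of_mem_nhds hnhds]
    rw [h3]
    exact h2
  have hderiv_eq : ∀ p ∈ S, deriv (fun x => Φ (x, p.2)) p.1 = Ψ p :=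
    fun p hp => (hderiv p hp).deriv
  -- slices
  have hΦcont : ContinuousOn Φ R := hΦ.continuousOn
  have hslice : ∀ y ∈ Icc (0:ℝ) d, ContinuousOn (fun x => Φ (x, y)) (Icc (-δ) δ) := by
    intro y hy
    exact hΦcont.comp (continuous_id.prodMk continuous_const).continuousOn
      (fun x hx => ⟨hx, hy⟩)
  have hsliceY : ∀ x ∈ Icc (-δ) δ, ContinuousOn (fun y => Φ (x, y)) (Icc (0:ℝ) d) := by
    intro x hx
    exact hΦcont.comp (continuous_const.prodMk continuous_id).continuousOn
      (fun y hy => ⟨hx, hy⟩)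
  -- the key functions
  set a : ℝ → ℝ := fun y => ‖Φ (-δ, y)‖ with hadef
  set b : ℝ → ℝ := fun y => ‖Φ (δ, y)‖ with hbdef
  set J : ℝ → ℝ := fun y => ∫ t in Ioo (-δ) δ, ‖Ψ (t, y)‖ with hJdef
  set h : ℝ → ℝ := fun y => ∫ t in Ioo (-δ) δ, ‖Ψ (t, y)‖ ^ 2 with hhdef
  have hJ0 : ∀ y, 0 ≤ J y := fun y =>
    setIntegral_nonneg measurableSet_Ioo (fun t _ => norm_nonneg _)
  have hh0 : ∀ y, 0 ≤ h y := fun y =>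
    setIntegral_nonneg measurableSet_Ioo (fun t _ => by positivity)
  have ha0 : ∀ y, 0 ≤ a y := fun y => norm_nonneg _
  have hb0 : ∀ y, 0 ≤ b y := fun y => norm_nonneg _
  -- slice continuity of Ψ
  have hΨsliceC : ∀ y : ℝ, Continuous (fun t => Ψ (t, y)) := fun y =>
    hΨcont.comp (continuous_id.prodMk continuous_const)
  have hJint1 : ∀ y : ℝ, IntegrableOn (fun t => ‖Ψ (t, y)‖) (Ioo (-δ) δ) :=
    fun y => (((hΨsliceC y).norm.continuousOn).integrableOn_compact isCompact_Icc).mono_set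
      Ioo_subset_Icc_self
  -- FTC bounds
  have bound1 : ∀ y ∈ Ioo (0:ℝ) d, ∀ x ∈ Ioo (-δ) δ, ‖Φ (x, y)‖ ≤ a y + J y := by
    intro y hy x hx
    have hyI : y ∈ Icc (0:ℝ) d := Ioo_subset_Icc_self hy
    have key1 : ∫ t in (-δ)..x, Ψ (t, y) = Φ (x, y) - Φ (-δ, y) := by
      apply intervalIntegral.integral_eq_sub_of_hasDeriv_right_of_le hx.1.le
      · exact (hslice y hyI).mono (Icc_subset_Icc le_rfl hx.2.le)
      · intro t ht
        exact (hderiv (t, y) ⟨Ioo_subset_Ioo le_rfl hx.2.le ht, hy⟩).hasDerivWithinAt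
      · exact (hΨsliceC y).intervalIntegrable _ _
    have hΦeq : Φ (x, y) = Φ (-δ, y) + ∫ t in (-δ)..x, Ψ (t, y) := by
      rw [key1]; ring
    calc ‖Φ (x, y)‖ = ‖Φ (-δ, y) + ∫ t in (-δ)..x, Ψ (t, y)‖ := by rw [← hΦeq]
      _ ≤ a y + ‖∫ t in (-δ)..x, Ψ (t, y)‖ := norm_add_le _ _
      _ ≤ a y + ∫ t in (-δ)..x, ‖Ψ (t, y)‖ := by
          exact add_le_add_right (intervalIntegral.norm_integral_le_integral_norm hx.1.le) _
      _ ≤ a y + J y := by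
          apply add_le_add_right
          rw [intervalIntegral.integral_of_le hx.1.le, integral_Ioc_eq_integral_Ioo]
          exact setIntegral_mono_set (hJint1 y)
            (Filter.Eventually.of_forall fun t => norm_nonneg _)
            ((Ioo_subset_Ioo le_rfl hx.2.le).eventuallyLE)
  have bound2 : ∀ y ∈ Ioo (0:ℝ) d, ∀ x ∈ Ioo (-δ) δ, ‖Φ (x, y)‖ ≤ b y + J y := by
    intro y hy x hx
    have hyI : y ∈ Icc (0:ℝ) d := Ioo_subset_Icc_self hy
    have key2 : ∫ t in x..δ, Ψ (t, y) = Φ (δ, y) - Φ (x, y) := by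
      apply intervalIntegral.integral_eq_sub_of_hasDeriv_right_of_le hx.2.le
      · exact (hslice y hyI).mono (Icc_subset_Icc hx.1.le le_rfl)
      · intro t ht
        exact (hderiv (t, y) ⟨Ioo_subset_Ioo hx.1.le le_rfl ht, hy⟩).hasDerivWithinAt
      · exact (hΨsliceC y).intervalIntegrable _ _
    have hΦeq : Φ (x, y) = Φ (δ, y) - ∫ t in x..δ, Ψ (t, y) := by
      rw [key2]; ring
    calc ‖Φ (x, y)‖ = ‖Φ (δ, y) - ∫ t in x..δ, Ψ (t, y)‖ := by rw [← hΦeq]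
      _ ≤ b y + ‖∫ t in x..δ, Ψ (t, y)‖ := norm_sub_le _ _
      _ ≤ b y + ∫ t in x..δ, ‖Ψ (t, y)‖ := by
          exact add_le_add_right (intervalIntegral.norm_integral_le_integral_norm hx.2.le) _
      _ ≤ b y + J y := by
          apply add_le_add_right
          rw [intervalIntegral.integral_of_le hx.2.le, integral_Ioc_eq_integral_Ioo]
          exact setIntegral_mono_set (hJint1 y)
            (Filter.Eventually.of_forall fun t => norm_nonneg _)
            ((Ioo_subset_Ioo hx.1.le le_rfl).eventuallyLE)
  -- pointwise squared bound
  have sqbound : ∀ y ∈ Ioo (0:ℝ) d, ∀ x ∈ Ioo (-δ) δ,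
      ‖Φ (x, y)‖ ^ 2 ≤ (a y + J y) * (b y + J y) := by
    intro y hy x hx
    rw [sq]
    exact mul_le_mul (bound1 y hy x hx) (bound2 y hy x hx) (norm_nonneg _)
      (by have := ha0 y; have := hJ0 y; linarith)
  -- measure plumbing
  have hmeq : (volume.restrict (Ioo (-δ) δ)).prod (volume.restrict (Ioo (0:ℝ) d))
      = (volume : Measure (ℝ×ℝ)).restrict S := by
    rw [Measure.prod_restrict, ← Measure.volume_eq_prod]
  have toProd : ∀ f : ℝ×ℝ → ℝ, IntegrableOn f S →
      Integrable f ((volume.restrict (Ioo (-δ) δ)).prod (volume.restrict (Ioo (0:ℝ) d))) :=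
    fun f hf => by rw [hmeq]; exact hf
  have fub : ∀ f : ℝ×ℝ → ℝ, IntegrableOn f S →
      ∫ p in S, f p = ∫ y in Ioo (0:ℝ) d, ∫ x in Ioo (-δ) δ, f (x, y) := by
    intro f hf
    have hf' := toProd f hf
    calc ∫ p in S, f p
        = ∫ p, f p ∂((volume.restrict (Ioo (-δ) δ)).prod (volume.restrict (Ioo (0:ℝ) d))) := by
          rw [hmeq]
      _ = ∫ x in Ioo (-δ) δ, ∫ y in Ioo (0:ℝ) d, f (x, y) := integral_prod f hf'
      _ = ∫ y in Ioo (0:ℝ) d, ∫ x in Ioo (-δ) δ, f (x, y) := integral_integral_swap hf'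
  have hΦsqInt : IntegrableOn (fun p => ‖Φ p‖ ^ 2) S :=
    ((hΦcont.norm.pow 2).integrableOn_compact hRcomp).mono_set hSR
  have hΨsqInt : IntegrableOn (fun p => ‖Ψ p‖ ^ 2) S :=
    (((hΨcont.norm.pow 2).continuousOn).integrableOn_compact hRcomp).mono_set hSR
  have hΨnInt : IntegrableOn (fun p => ‖Ψ p‖) S :=
    ((hΨcont.norm.continuousOn).integrableOn_compact hRcomp).mono_set hSR
  have hJInt : Integrable J (volume.restrict (Ioo (0:ℝ) d)) :=
    (toProd _ hΨnInt).integral_prod_right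
  have hhInt : Integrable h (volume.restrict (Ioo (0:ℝ) d)) :=
    (toProd _ hΨsqInt).integral_prod_right
  set Q : ℝ := ∫ p in S, ‖Ψ p‖ ^ 2 with hQdef
  have hQeq : ∫ y in Ioo (0:ℝ) d, h y = Q := (fub _ hΨsqInt).symm
  have hQ0 : 0 ≤ Q := setIntegral_nonneg hSmeas (fun p _ => by positivity)
  -- MemLp facts
  have hacont : ContinuousOn a (Icc (0:ℝ) d) := (hsliceY (-δ) (left_mem_Icc.mpr hδδ.le)).norm
  have hbcont : ContinuousOn b (Icc (0:ℝ) d) := (hsliceY δ (right_mem_Icc.mpr hδδ.le)).norm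
  have memOf : ∀ f : ℝ → ℝ, ContinuousOn f (Icc (0:ℝ) d) →
      MemLp f 2 (volume.restrict (Ioo (0:ℝ) d)) := by
    intro f hf
    refine (memLp_two_iff_integrable_sq
      ((hf.mono Ioo_subset_Icc_self).aestronglyMeasurable measurableSet_Ioo)).mpr ?_
    exact ((hf.pow 2).integrableOn_compact isCompact_Icc).mono_set Ioo_subset_Icc_self
  have haMem := memOf a hacont
  have hbMem := memOf b hbcont
  have habMem : MemLp (fun y => a y + b y) 2 (volume.restrict (Ioo (0:ℝ) d)) := haMem.add hbMem
  -- per-y Cauchy-Schwarz for J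
  have hμx : (volume (Ioo (-δ) δ)).toReal = 2 * δ := by
    rw [Real.volume_Ioo, ENNReal.toReal_ofReal (by linarith)]; ring
  have hJle : ∀ y : ℝ, J y ≤ Real.sqrt (h y) * Real.sqrt (2 * δ) := by
    intro y
    have h1 : MemLp (fun t => ‖Ψ (t, y)‖) 2 (volume.restrict (Ioo (-δ) δ)) := by
      refine (memLp_two_iff_integrable_sq (hΨsliceC y).norm.aestronglyMeasurable).mpr ?_
      exact ((((hΨsliceC y).norm.pow 2).continuousOn).integrableOn_compact
        isCompact_Icc).mono_set Ioo_subset_Icc_self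
    have h2 : MemLp (fun _ : ℝ => (1:ℝ)) 2 (volume.restrict (Ioo (-δ) δ)) := memLp_const 1
    have hcs := cs_helper (fun t => norm_nonneg _) (fun _ => zero_le_one) h1 h2
    simp only [mul_one, one_pow] at hcs
    calc J y ≤ Real.sqrt (∫ t in Ioo (-δ) δ, ‖Ψ (t, y)‖ ^ 2) *
          Real.sqrt (∫ _t in Ioo (-δ) δ, (1:ℝ)) := hcs
      _ = Real.sqrt (h y) * Real.sqrt (2 * δ) := by
          rw [setIntegral_const, smul_eq_mul, mul_one, measureReal_def, hμx]
  have hJsq : ∀ y : ℝ, J y ^ 2 ≤ 2 * δ * h y := by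
    intro y
    calc J y ^ 2 ≤ (Real.sqrt (h y) * Real.sqrt (2*δ)) ^ 2 :=
          pow_le_pow_left₀ (hJ0 y) (hJle y) 2
      _ = h y * (2*δ) := by rw [mul_pow, Real.sq_sqrt (hh0 y), Real.sq_sqrt (by linarith)]
      _ = 2 * δ * h y := by ring
  have hJsqInt : Integrable (fun y => J y ^ 2) (volume.restrict (Ioo (0:ℝ) d)) := by
    refine Integrable.mono' (hhInt.const_mul (2*δ)) ?_ (Filter.Eventually.of_forall fun y => ?_)
    · exact hJInt.1.pow 2
    · rw [Real.norm_eq_abs, abs_of_nonneg (by positivity)]; exact hJsq y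
  have hJMem : MemLp J 2 (volume.restrict (Ioo (0:ℝ) d)) :=
    (memLp_two_iff_integrable_sq hJInt.1).mpr hJsqInt
  -- per-y integral bound
  have key : ∀ y ∈ Ioo (0:ℝ) d,
      (∫ x in Ioo (-δ) δ, ‖Φ (x, y)‖ ^ 2) ≤ 2 * δ * ((a y + J y) * (b y + J y)) := by
    intro y hy
    have hint1 : IntegrableOn (fun x => ‖Φ (x, y)‖ ^ 2) (Ioo (-δ) δ) :=
      (((hslice y (Ioo_subset_Icc_self hy)).norm.pow 2).integrableOn_compact
        isCompact_Icc).mono_set Ioo_subset_Icc_self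
    calc (∫ x in Ioo (-δ) δ, ‖Φ (x, y)‖ ^ 2)
        ≤ ∫ _x in Ioo (-δ) δ, (a y + J y) * (b y + J y) :=
          setIntegral_mono_on hint1
            ((integrableOn_const_iff).mpr (Or.inr (by rw [Real.volume_Ioo]; exact ENNReal.ofReal_lt_top)))
            measurableSet_Ioo (fun x hx => sqbound y hy x hx)
      _ = 2 * δ * ((a y + J y) * (b y + J y)) := by rw [setIntegral_const, smul_eq_mul, measureReal_def, hμx]
  -- integrate in y
  have hFInt : Integrable (fun y => ∫ x in Ioo (-δ) δ, ‖Φ (x, y)‖ ^ 2)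
      (volume.restrict (Ioo (0:ℝ) d)) := (toProd _ hΦsqInt).integral_prod_right
  have hGexp : (fun y => 2*δ*((a y + J y) * (b y + J y)))
      = fun y => 2*δ*(a y * b y + ((a y + b y) * J y + J y ^ 2)) := by funext y; ring
  have hab_int : Integrable (fun y => a y * b y) (volume.restrict (Ioo (0:ℝ) d)) :=
    mul_int_helper haMem hbMem
  have habJ_int : Integrable (fun y => (a y + b y) * J y) (volume.restrict (Ioo (0:ℝ) d)) :=
    mul_int_helper habMem hJMem
  have hsum2 : Integrable (fun y => (a y + b y) * J y + J y ^ 2)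
      (volume.restrict (Ioo (0:ℝ) d)) := habJ_int.add hJsqInt
  have hsum_int : Integrable (fun y => a y * b y + ((a y + b y) * J y + J y ^ 2))
      (volume.restrict (Ioo (0:ℝ) d)) := hab_int.add hsum2
  have hGInt : Integrable (fun y => 2*δ*((a y + J y)*(b y + J y)))
      (volume.restrict (Ioo (0:ℝ) d)) := by rw [hGexp]; exact hsum_int.const_mul _
  have main1 : ∫ p in S, ‖Φ p‖ ^ 2 ≤
      2*δ*((∫ y in Ioo (0:ℝ) d, a y * b y) +
        ((∫ y in Ioo (0:ℝ) d, (a y + b y) * J y) + (∫ y in Ioo (0:ℝ) d, J y ^ 2))) := by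
    rw [fub _ hΦsqInt]
    calc ∫ y in Ioo (0:ℝ) d, ∫ x in Ioo (-δ) δ, ‖Φ (x, y)‖ ^ 2
        ≤ ∫ y in Ioo (0:ℝ) d, 2*δ*((a y + J y)*(b y + J y)) :=
          setIntegral_mono_on hFInt hGInt measurableSet_Ioo key
      _ = ∫ y in Ioo (0:ℝ) d, 2*δ*(a y * b y + ((a y + b y) * J y + J y ^ 2)) := by rw [hGexp]
      _ = 2*δ* ∫ y in Ioo (0:ℝ) d, (a y * b y + ((a y + b y) * J y + J y ^ 2)) :=
          MeasureTheory.integral_const_mul _ _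
      _ = 2*δ*((∫ y in Ioo (0:ℝ) d, a y * b y) +
          ((∫ y in Ioo (0:ℝ) d, (a y + b y) * J y) + (∫ y in Ioo (0:ℝ) d, J y ^ 2))) := by
          rw [integral_add hab_int hsum2, integral_add habJ_int hJsqInt]
  -- term bounds
  have T1 : ∫ y in Ioo (0:ℝ) d, a y * b y ≤
      Real.sqrt (∫ y in Ioo (0:ℝ) d, a y ^ 2) * Real.sqrt (∫ y in Ioo (0:ℝ) d, b y ^ 2) :=
    cs_helper ha0 hb0 haMem hbMem
  have hJ2Q : ∫ y in Ioo (0:ℝ) d, J y ^ 2 ≤ 2*δ*Q := by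
    calc ∫ y in Ioo (0:ℝ) d, J y ^ 2 ≤ ∫ y in Ioo (0:ℝ) d, 2*δ*h y :=
          integral_mono hJsqInt (hhInt.const_mul _) (fun y => hJsq y)
      _ = 2*δ* ∫ y in Ioo (0:ℝ) d, h y := MeasureTheory.integral_const_mul _ _
      _ = 2*δ*Q := by rw [hQeq]
  have T2 : ∫ y in Ioo (0:ℝ) d, (a y + b y) * J y ≤
      Real.sqrt (2*δ) * Real.sqrt (∫ y in Ioo (0:ℝ) d, (a y + b y) ^ 2) * Real.sqrt Q := by
    have hcs := cs_helper (fun y => by have := ha0 y; have := hb0 y; linarith) hJ0 habMem hJMem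
    calc ∫ y in Ioo (0:ℝ) d, (a y + b y) * J y
        ≤ Real.sqrt (∫ y in Ioo (0:ℝ) d, (a y + b y) ^ 2) *
            Real.sqrt (∫ y in Ioo (0:ℝ) d, J y ^ 2) := hcs
      _ ≤ Real.sqrt (∫ y in Ioo (0:ℝ) d, (a y + b y) ^ 2) * Real.sqrt (2*δ*Q) :=
          mul_le_mul_of_nonneg_left (Real.sqrt_le_sqrt hJ2Q) (Real.sqrt_nonneg _)
      _ = Real.sqrt (2*δ) * Real.sqrt (∫ y in Ioo (0:ℝ) d, (a y + b y) ^ 2) * Real.sqrt Q := by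
          rw [Real.sqrt_mul (by linarith : (0:ℝ) ≤ 2*δ) Q]; ring
  -- conclusion
  have hQrw : (∫ p in S, ‖deriv (fun x => Φ (x, p.2)) p.1‖ ^ 2) = Q := by
    rw [hQdef]
    exact setIntegral_congr_fun hSmeas (fun p hp => by rw [hderiv_eq p hp])
  rw [hQrw]
  refine main1.trans ?_
  have hsum : (∫ y in Ioo (0:ℝ) d, a y * b y) +
      ((∫ y in Ioo (0:ℝ) d, (a y + b y) * J y) + (∫ y in Ioo (0:ℝ) d, J y ^ 2)) ≤
      Real.sqrt (∫ y in Ioo (0:ℝ) d, a y ^ 2) * Real.sqrt (∫ y in Ioo (0:ℝ) d, b y ^ 2) +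
      (Real.sqrt (2*δ) * Real.sqrt (∫ y in Ioo (0:ℝ) d, (a y + b y) ^ 2) * Real.sqrt Q +
        2*δ*Q) := add_le_add T1 (add_le_add T2 hJ2Q)
  calc 2*δ*((∫ y in Ioo (0:ℝ) d, a y * b y) +
      ((∫ y in Ioo (0:ℝ) d, (a y + b y) * J y) + (∫ y in Ioo (0:ℝ) d, J y ^ 2)))
      ≤ 2*δ*(Real.sqrt (∫ y in Ioo (0:ℝ) d, a y ^ 2) * Real.sqrt (∫ y in Ioo (0:ℝ) d, b y ^ 2) +
        (Real.sqrt (2*δ) * Real.sqrt (∫ y in Ioo (0:ℝ) d, (a y + b y) ^ 2) * Real.sqrt Q +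
          2*δ*Q)) := mul_le_mul_of_nonneg_left hsum (by linarith)
    _ = 2*δ*(Real.sqrt (∫ y in Ioo (0:ℝ) d, a y ^ 2) * Real.sqrt (∫ y in Ioo (0:ℝ) d, b y ^ 2) +
        Real.sqrt (2*δ) * Real.sqrt (∫ y in Ioo (0:ℝ) d, (a y + b y) ^ 2) * Real.sqrt Q +
          2*δ*Q) := by ring
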